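/- The group of polynomial automorphisms of ℂ^n (n ≥ 2) with Jacobian determinant 1 acts k-transitively on ℂ^n for every k ∈ ℕ: given pairwise distinct points p_1,...,p_k and pairwise distinct points q_1,...,q_k in ℂ^n, there exists a polynomial automorphism φ of ℂ^n with constant Jacobian determinant 1 such that φ(p_i) = q_i for all i. -/
import Mathlib


/-- `φ : ℂⁿ → ℂⁿ` is a polynomial map. -/
def IsPolyMap (n : ℕ) (φ : (Fin n → ℂ) → (Fin n → ℂ)) : Prop :=
  ∃ P : Fin n → MvPolynomial (Fin n) ℂ, ∀ x i, φ x i = MvPolynomial.eval x (P i)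

/-- `φ` is a polynomial automorphism of `ℂⁿ` (bijective polynomial map with a
polynomial inverse) whose Jacobian determinant is constantly `1`. -/
def IsPolyAutDetOne (n : ℕ) (φ : (Fin n → ℂ) → (Fin n → ℂ)) : Prop :=
  ∃ P : Fin n → MvPolynomial (Fin n) ℂ,
    (∀ x i, φ x i = MvPolynomial.eval x (P i)) ∧
    (∃ ψ : (Fin n → ℂ) → (Fin n → ℂ), IsPolyMap n ψ ∧
      Function.LeftInverse ψ φ ∧ Function.RightInverse ψ φ) ∧
    Matrix.det (Matrix.of fun i j : Fin n => MvPolynomial.pderiv j (P i)) = 1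

open MvPolynomial
lemma my_pderiv_bind₁ {n : ℕ} (Q : Fin n → MvPolynomial (Fin n) ℂ)
    (p : MvPolynomial (Fin n) ℂ) (j : Fin n) :
    pderiv j (bind₁ Q p) = ∑ i, bind₁ Q (pderiv i p) * pderiv j (Q i) := by
  induction p using MvPolynomial.induction_on with
  | C a => simp
  | add f g hf hg =>
      simp only [map_add, hf, hg, ← Finset.sum_add_distrib, add_mul]
  | mul_X f i hf =>
      have key : ∀ i' : Fin n, bind₁ Q (pderiv i' (f * X i)) * pderiv j (Q i') =
          (bind₁ Q (pderiv i' f) * pderiv j (Q i')) * Q i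
          + (if i' = i then bind₁ Q f * pderiv j (Q i) else 0) := by
        intro i'
        rw [pderiv_mul, map_add, map_mul, map_mul, bind₁_X_right, add_mul]
        congr 1
        · ring
        · by_cases h : i' = i
          · subst h; simp
          · simp [pderiv_X_of_ne (Ne.symm h), h]
      rw [map_mul, bind₁_X_right, pderiv_mul, hf, Finset.sum_congr rfl fun i' _ => key i',
        Finset.sum_add_distrib, Finset.sum_ite_eq' Finset.univ i, ← Finset.sum_mul]
      simp

lemma my_eval_bind₁ {n : ℕ} (x : Fin n → ℂ) (Q : Fin n → MvPolynomial (Fin n) ℂ)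
    (p : MvPolynomial (Fin n) ℂ) :
    eval x (bind₁ Q p) = eval (fun i => eval x (Q i)) p := by
  induction p using MvPolynomial.induction_on with
  | C a => simp
  | add f g hf hg => simp [hf, hg]
  | mul_X f i hf => simp [hf]

lemma IsPolyAutDetOne.comp {n : ℕ} {φ ψ : (Fin n → ℂ) → (Fin n → ℂ)}
    (hφ : IsPolyAutDetOne n φ) (hψ : IsPolyAutDetOne n ψ) :
    IsPolyAutDetOne n (φ ∘ ψ) := by
  obtain ⟨P, hP, ⟨φ', hφ'poly, hφl, hφr⟩, hPdet⟩ := hφ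
  obtain ⟨Q, hQ, ⟨ψ', hψ'poly, hψl, hψr⟩, hQdet⟩ := hψ
  refine ⟨fun i => bind₁ Q (P i), ?_, ⟨ψ' ∘ φ', ?_, ?_, ?_⟩, ?_⟩
  · intro x i
    rw [my_eval_bind₁, Function.comp_apply, hP,
      show (fun j => eval x (Q j)) = ψ x from funext fun j => (hQ x j).symm]
  · obtain ⟨P', hP'⟩ := hφ'poly
    obtain ⟨Q', hQ'⟩ := hψ'poly
    refine ⟨fun i => bind₁ P' (Q' i), fun x i => ?_⟩
    rw [my_eval_bind₁, Function.comp_apply, hQ',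
      show (fun j => eval x (P' j)) = φ' x from funext fun j => (hP' x j).symm]
  · exact (hφl.comp hψl)
  · exact (hφr.comp hψr)
  · have hmat : (Matrix.of fun i j : Fin n => pderiv j (bind₁ Q (P i)))
        = ((Matrix.of fun i j : Fin n => pderiv j (P i)).map (bind₁ Q))
          * (Matrix.of fun i j : Fin n => pderiv j (Q i)) := by
      refine Matrix.ext fun i j => ?_
      simp only [Matrix.of_apply, Matrix.mul_apply, Matrix.map_apply]
      exact my_pderiv_bind₁ Q (P i) j
    rw [hmat, Matrix.det_mul, hQdet, mul_one]
    have := (RingHom.map_det ((bind₁ Q : MvPolynomial (Fin n) ℂ →ₐ[ℂ] MvPolynomial (Fin n) ℂ) :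
        MvPolynomial (Fin n) ℂ →+* MvPolynomial (Fin n) ℂ)
        (Matrix.of fun i j : Fin n => pderiv j (P i))).symm
    rw [show ((Matrix.of fun i j : Fin n => pderiv j (P i)).map (bind₁ Q))
        = ((bind₁ Q : MvPolynomial (Fin n) ℂ →ₐ[ℂ] MvPolynomial (Fin n) ℂ) :
          MvPolynomial (Fin n) ℂ →+* MvPolynomial (Fin n) ℂ).mapMatrix
          (Matrix.of fun i j : Fin n => pderiv j (P i)) from rfl, this, hPdet]
    simp

lemma mulVec_polymap {n : ℕ} (M : Matrix (Fin n) (Fin n) ℂ) :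
    ∀ x : Fin n → ℂ, ∀ i, M.mulVec x i = eval x (∑ j, C (M i j) * X j) := by
  intro x i
  simp [Matrix.mulVec, dotProduct]

lemma linear_aut {n : ℕ} (M : Matrix (Fin n) (Fin n) ℂ) (hdet : M.det = 1) :
    IsPolyAutDetOne n (M.mulVec) := by
  have hu : IsUnit M.det := by rw [hdet]; exact isUnit_one
  refine ⟨fun i => ∑ j, C (M i j) * X j, fun x i => mulVec_polymap M x i,
    ⟨(M⁻¹).mulVec, ⟨fun i => ∑ j, C (M⁻¹ i j) * X j, fun x i => mulVec_polymap M⁻¹ x i⟩,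
      ?_, ?_⟩, ?_⟩
  · intro x
    rw [Matrix.mulVec_mulVec, Matrix.nonsing_inv_mul M hu, Matrix.one_mulVec]
  · intro x
    rw [Matrix.mulVec_mulVec, Matrix.mul_nonsing_inv M hu, Matrix.one_mulVec]
  · have : (Matrix.of fun i j : Fin n => pderiv j (∑ j', C (M i j') * X j'))
        = M.map C := by
      refine Matrix.ext fun i j => ?_
      simp only [Matrix.of_apply, Matrix.map_apply, map_sum, pderiv_C_mul]
      rw [Finset.sum_eq_single j]
      · simp
      · intro b _ hb; rw [pderiv_X_of_ne hb, mul_zero]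
      · simp
    rw [this, show M.map C = (C : ℂ →+* MvPolynomial (Fin n) ℂ).mapMatrix M from rfl,
      ← RingHom.map_det, hdet, map_one]

/-- multishear along coordinate 0 -/
def mshear (n : ℕ) [NeZero n] (f : Fin n → Polynomial ℂ) : (Fin n → ℂ) → (Fin n → ℂ) :=
  fun x j => x j + (f j).eval (x 0)

lemma pderiv_paeval_ne {n : ℕ} [NeZero n] (g : Polynomial ℂ) {j : Fin n} (hj : j ≠ 0) :
    pderiv j (Polynomial.aeval (X (0 : Fin n) : MvPolynomial (Fin n) ℂ) g) = 0 := by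
  induction g using Polynomial.induction_on with
  | C a => simp
  | add f g hf hg => simp [hf, hg]
  | monomial m a hm =>
      simp only [map_mul, map_pow, Polynomial.aeval_C, Polynomial.aeval_X]
      simp [pderiv_mul, pderiv_pow, pderiv_X_of_ne (Ne.symm hj), Pi.single_eq_of_ne (Ne.symm hj)]

lemma eval_paeval {n : ℕ} [NeZero n] (x : Fin n → ℂ) (g : Polynomial ℂ) :
    eval x (Polynomial.aeval (X (0 : Fin n) : MvPolynomial (Fin n) ℂ) g) =
      Polynomial.eval (x 0) g := by
  induction g using Polynomial.induction_on with
  | C a => simp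
  | add f g hf hg => simp [hf, hg]
  | monomial m a hm => simp

lemma mshear_zero_coord {n : ℕ} [NeZero n] (f : Fin n → Polynomial ℂ) (hf0 : f 0 = 0) (x : Fin n → ℂ) :
    mshear n f x 0 = x 0 := by
  simp [mshear, hf0]

lemma mshear_aut {n : ℕ} [NeZero n] (f : Fin n → Polynomial ℂ) (hf0 : f 0 = 0) :
    IsPolyAutDetOne n (mshear n f) := by
  refine ⟨fun j => X j + Polynomial.aeval (X (0 : Fin n)) (f j), fun x j => ?_,
    ⟨mshear n (-f), ⟨fun j => X j + Polynomial.aeval (X (0 : Fin n)) ((-f) j), fun x j => ?_⟩,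
      ?_, ?_⟩, ?_⟩
  · simp [mshear, eval_paeval]
  · simp [mshear, eval_paeval]
  · intro x
    funext j
    simp only [mshear, hf0, Polynomial.eval_zero, add_zero, Pi.neg_apply, Polynomial.eval_neg]
    abel
  · intro x
    funext j
    simp only [mshear, hf0, Polynomial.eval_zero, add_zero, Pi.neg_apply, Polynomial.eval_neg,
      neg_zero, sub_zero]
    abel
  · have htri : (Matrix.of fun i j : Fin n =>
        pderiv j (X i + Polynomial.aeval (X (0 : Fin n) : MvPolynomial (Fin n) ℂ)
          (f i))).BlockTriangular OrderDual.toDual := by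
      intro i j hij
      have hij' : (j : Fin n) ≠ i := ne_of_gt hij
      have hj0 : (j : Fin n) ≠ 0 := by
        rintro rfl
        have h2 : i < (0 : Fin n) := hij
        simp [Fin.lt_def] at h2
      simp [Pi.single_eq_of_ne (Ne.symm hij'), Pi.single_eq_of_ne (Ne.symm hj0),
        pderiv_X_of_ne (Ne.symm hij'), pderiv_paeval_ne _ hj0]
    rw [Matrix.det_of_lowerTriangular _ htri]
    refine Finset.prod_eq_one fun i _ => ?_
    by_cases h : i = 0
    · subst h; simp [hf0]
    · simp [Pi.single_eq_of_ne (Ne.symm h), pderiv_paeval_ne _ h]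

def rowMat (n : ℕ) [NeZero n] (t : ℂ) : Matrix (Fin n) (Fin n) ℂ :=
  Matrix.of fun i j => if i = 0 then t ^ (j : ℕ) else if i = j then 1 else 0

lemma rowMat_det (n : ℕ) [NeZero n] (t : ℂ) : (rowMat n t).det = 1 := by
  have htri : (rowMat n t).BlockTriangular id := by
    intro i j hij
    have hi0 : i ≠ 0 := by
      rintro rfl
      simp only [id_eq] at hij
      exact absurd hij (by simp [Fin.lt_def])
    have : i ≠ j := fun h => absurd (h ▸ hij) (lt_irrefl _)
    simp [rowMat, hi0, this]
  rw [Matrix.det_of_upperTriangular htri]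
  refine Finset.prod_eq_one fun i _ => ?_
  by_cases h : i = 0
  · subst h; simp [rowMat]
  · simp [rowMat, h]

lemma rowMat_mulVec0 (n : ℕ) [NeZero n] (t : ℂ) (x : Fin n → ℂ) :
    (rowMat n t).mulVec x 0 = ∑ j : Fin n, t ^ (j : ℕ) * x j := by
  simp [rowMat, Matrix.mulVec, dotProduct]

lemma exists_t {n k : ℕ} (p : Fin k → Fin n → ℂ) (hp : Function.Injective p) :
    ∃ t : ℂ, Function.Injective (fun i => ∑ j : Fin n, t ^ (j : ℕ) * p i j) := by
  classical
  set g : Fin k × Fin k → Polynomial ℂ :=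
    fun pr => ∑ j : Fin n, Polynomial.C (p pr.1 j - p pr.2 j) * Polynomial.X ^ (j : ℕ) with hg
  have hbad : (⋃ pr : Fin k × Fin k, ((g pr).roots.toFinset : Set ℂ)).Finite :=
    Set.finite_iUnion fun pr => (Multiset.toFinset _).finite_toSet
  obtain ⟨t, ht⟩ := hbad.infinite_compl.nonempty
  refine ⟨t, fun a b hab => ?_⟩
  by_contra hne
  have hab' : (∑ j : Fin n, t ^ (j : ℕ) * p a j) = ∑ j : Fin n, t ^ (j : ℕ) * p b j := hab
  have hgne : g (a, b) ≠ 0 := by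
    have hne' : p a ≠ p b := fun h => hne (hp h)
    obtain ⟨j0, hj0⟩ : ∃ j0, p a j0 ≠ p b j0 := by
      by_contra h
      push_neg at h
      exact hne' (funext h)
    intro h0
    have hc : (g (a, b)).coeff (j0 : ℕ) = p a j0 - p b j0 := by
      rw [hg]
      simp only [Polynomial.finset_sum_coeff, Polynomial.coeff_C_mul, Polynomial.coeff_X_pow]
      rw [Finset.sum_eq_single j0]
      · simp
      · intro c _ hc
        have h2 : ¬((j0 : ℕ) = (c : ℕ)) := fun h => hc (Fin.val_injective h.symm)
        simp [h2]
      · simp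
    rw [h0] at hc
    simp only [Polynomial.coeff_zero] at hc
    exact hj0 (sub_eq_zero.mp hc.symm)
  have heval : (g (a, b)).eval t = 0 := by
    rw [hg]
    simp only [Polynomial.eval_finset_sum, Polynomial.eval_mul, Polynomial.eval_C,
      Polynomial.eval_pow, Polynomial.eval_X]
    have h2 : ∑ j : Fin n, (p a j - p b j) * t ^ (j : ℕ)
        = (∑ j : Fin n, t ^ (j : ℕ) * p a j) - (∑ j : Fin n, t ^ (j : ℕ) * p b j) := by
      rw [← Finset.sum_sub_distrib]
      exact Finset.sum_congr rfl fun j _ => by ring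
    rw [h2, hab', sub_self]
  have hmem : t ∈ (⋃ pr : Fin k × Fin k, ((g pr).roots.toFinset : Set ℂ)) := by
    refine Set.mem_iUnion.mpr ⟨(a, b), ?_⟩
    simp only [Finset.mem_coe, Multiset.mem_toFinset]
    exact (Polynomial.mem_roots hgne).mpr heval
  exact ht hmem

lemma interp_exists {k : ℕ} (x : Fin k → ℂ) (hx : Function.Injective x) (c : Fin k → ℂ) :
    ∃ f : Polynomial ℂ, ∀ i, f.eval (x i) = c i :=
  ⟨Lagrange.interpolate Finset.univ x c,
    fun i => Lagrange.eval_interpolate_at_node c (hx.injOn) (Finset.mem_univ i)⟩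

lemma transvec_mulVec {n : ℕ} [NeZero n] (v : Fin n → ℂ) (j : Fin n) :
    (Matrix.transvection (0:Fin n) 1 (1:ℂ)).mulVec v j = v j + if j = 0 then v 1 else 0 := by
  by_cases hj : j = 0
  · simp [Matrix.transvection, Matrix.add_mulVec, Matrix.one_mulVec, Matrix.mulVec,
      dotProduct, Matrix.single, Matrix.one_apply, add_mul,
      Finset.sum_add_distrib, ite_and, Finset.sum_ite_eq, hj]
  · simp [Matrix.transvection, Matrix.add_mulVec, Matrix.one_mulVec, Matrix.mulVec,
      dotProduct, Matrix.single, Matrix.one_apply, add_mul,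
      Finset.sum_add_distrib, ite_and, Finset.sum_ite_eq, hj, Ne.symm hj]

lemma zero_ne_one_fin {n : ℕ} [NeZero n] (hn : 2 ≤ n) : (0:Fin n) ≠ 1 := by
  intro h
  have h1 : (1 : Fin n).val = 1 % n := rfl
  have h0 : (0 : Fin n).val = 0 := rfl
  have h2 := congrArg Fin.val h
  rw [h1, h0, Nat.mod_eq_of_lt (by omega)] at h2
  omega

/-- the group of polynomial automorphisms of `ℂⁿ` (`n ≥ 2`) with
Jacobian determinant `1` acts `k`-transitively on `ℂⁿ` for every `k`: any
`k` pairwise distinct points can be mapped to any other `k` pairwise distinct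
points by such an automorphism. -/
theorem stmt9 (n : ℕ) (hn : 2 ≤ n) (k : ℕ) (p q : Fin k → Fin n → ℂ)
    (hp : Function.Injective p) (hq : Function.Injective q) :
    ∃ φ : (Fin n → ℂ) → (Fin n → ℂ), IsPolyAutDetOne n φ ∧ ∀ i, φ (p i) = q i := by
  classical
  haveI : NeZero n := ⟨by omega⟩
  have h01 : (0:Fin n) ≠ 1 := zero_ne_one_fin hn
  obtain ⟨tp, htp⟩ := exists_t p hp
  obtain ⟨tq, htq⟩ := exists_t q hq
  set Mp := rowMat n tp with hMp
  set Mq := rowMat n tq with hMq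
  set p' : Fin k → Fin n → ℂ := fun i => Mp.mulVec (p i) with hp'
  set q' : Fin k → Fin n → ℂ := fun i => Mq.mulVec (q i) with hq'
  set xv : Fin k → ℂ := fun i => ∑ j : Fin n, tp ^ (j : ℕ) * p i j with hxv
  set yv : Fin k → ℂ := fun i => ∑ j : Fin n, tq ^ (j : ℕ) * q i j with hyv
  have hxinj : Function.Injective xv := htp
  have hyinj : Function.Injective yv := htq
  have hp'0 : ∀ i, p' i 0 = xv i := fun i => rowMat_mulVec0 n tp (p i)
  have hq'0 : ∀ i, q' i 0 = yv i := fun i => rowMat_mulVec0 n tq (q i)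
  choose F hFspec using fun j : Fin n => interp_exists xv hxinj (fun i => -(p' i j))
  choose H hHspec using fun j : Fin n => interp_exists yv hyinj (fun i => q' i j)
  obtain ⟨R, hR⟩ := interp_exists xv hxinj (fun i => yv i - xv i)
  obtain ⟨S, hS⟩ := interp_exists yv hyinj (fun i => xv i - yv i)
  set F' : Fin n → Polynomial ℂ := fun j => if j = 0 then 0 else F j with hF'
  set H' : Fin n → Polynomial ℂ := fun j => if j = 0 then 0 else H j with hH'
  set G1 : Fin n → Polynomial ℂ := fun j => if j = 1 then R else 0 with hG1
  set G2 : Fin n → Polynomial ℂ := fun j => if j = 1 then S else 0 with hG2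
  have hF'0 : F' 0 = 0 := by simp [hF']
  have hH'0 : H' 0 = 0 := by simp [hH']
  have hG10 : G1 0 = 0 := by simp [hG1, h01]
  have hG20 : G2 0 = 0 := by simp [hG2, h01]
  set T := Matrix.transvection (0:Fin n) 1 (1:ℂ) with hT
  refine ⟨(Mq⁻¹).mulVec ∘ mshear n H' ∘ mshear n G2 ∘ T.mulVec ∘ mshear n G1 ∘
    mshear n F' ∘ Mp.mulVec, ?_, ?_⟩
  · have hMqdet : Mq.det = 1 := rowMat_det n tq
    have hMqinvdet : (Mq⁻¹).det = 1 := by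
      rw [Matrix.det_nonsing_inv, hMqdet, Ring.inverse_one]
    exact (linear_aut _ hMqinvdet).comp ((mshear_aut H' hH'0).comp ((mshear_aut G2 hG20).comp
      ((linear_aut T (Matrix.det_transvection_of_ne _ _ h01 1)).comp ((mshear_aut G1 hG10).comp
      ((mshear_aut F' hF'0).comp (linear_aut Mp (rowMat_det n tp)))))))
  · intro i
    simp only [Function.comp_apply]
    have e2 : mshear n F' (Mp.mulVec (p i)) = fun j => if j = 0 then xv i else 0 := by
      funext j
      by_cases hj : j = 0
      · subst hj
        simp only [mshear, hF'0, Polynomial.eval_zero, add_zero, if_pos rfl]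
        exact hp'0 i
      · simp only [mshear, hF', if_neg hj]
        rw [show Mp.mulVec (p i) 0 = xv i from hp'0 i, hFspec j i]
        show p' i j + -(p' i j) = _
        simp [hj]
    rw [e2]
    have e3 : mshear n G1 (fun j => if j = 0 then xv i else 0)
        = fun j => if j = 0 then xv i else if j = 1 then yv i - xv i else 0 := by
      funext j
      by_cases hj : j = 0
      · subst hj; simp [mshear, hG10]
      · by_cases hj1 : j = 1
        · subst hj1
          simp [mshear, hG1, Ne.symm h01, hR i]
        · simp [mshear, hG1, hj, hj1]
    rw [e3]
    have e4 : T.mulVec (fun j => if j = 0 then xv i else if j = 1 then yv i - xv i else 0)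
        = fun j => if j = 0 then yv i else if j = 1 then yv i - xv i else 0 := by
      funext j
      rw [hT, transvec_mulVec]
      by_cases hj : j = 0
      · subst hj
        simp [Ne.symm h01]
      · simp [hj]
    rw [e4]
    have e5 : mshear n G2 (fun j => if j = 0 then yv i else if j = 1 then yv i - xv i else 0)
        = fun j => if j = 0 then yv i else 0 := by
      funext j
      by_cases hj : j = 0
      · subst hj; simp [mshear, hG20]
      · by_cases hj1 : j = 1
        · subst hj1
          simp [mshear, hG2, Ne.symm h01, hS i]
        · simp [mshear, hG2, hj, hj1]
    rw [e5]
    have e6 : mshear n H' (fun j => if j = 0 then yv i else 0) = q' i := by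
      funext j
      by_cases hj : j = 0
      · subst hj; simp [mshear, hH'0, (hq'0 i).symm]
      · simp only [mshear, hH', if_neg hj]
        simp [hj, hHspec j i]
    rw [e6]
    rw [hq', Matrix.mulVec_mulVec, Matrix.nonsing_inv_mul Mq (by rw [rowMat_det]; exact isUnit_one),
      Matrix.one_mulVec]
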